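/- Let j_1, …, j_r be positive integers and let J be a positive integer dividing lcm(j_1, …, j_r). Then, as rational numbers, ∑_{p prime, p ∣ J} (p^{a_p} − 1/p^{a_p}) ≤ ∑_{i=1}^{r} (j_i − 1/j_i), where for each prime p dividing J, a_p denotes the exponent of p in the prime factorization of J. -/

import Mathlib

open Finset

/-- f(m) + f(n) ≤ f(mn) where f(x) = x - 1/x, for x, y ≥ 1. -/
lemma f_superadd {x y : ℚ} (hx : 1 ≤ x) (hy : 1 ≤ y) :
    (x - 1 / x) + (y - 1 / y) ≤ x * y - 1 / (x * y) := by
  have hx0 : 0 < x := lt_of_lt_of_le one_pos hx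
  have hy0 : 0 < y := lt_of_lt_of_le one_pos hy
  have key : 1 / (x * y) = (1 / x) * (1 / y) := by
    field_simp
  have ha : 1 / x ≤ 1 := by rw [div_le_one hx0]; exact hx
  have hb : 1 / y ≤ 1 := by rw [div_le_one hy0]; exact hy
  have hxx : 2 - x ≤ 1 / x := by rw [le_div_iff₀ hx0]; nlinarith
  have hyy : 2 - y ≤ 1 / y := by rw [le_div_iff₀ hy0]; nlinarith
  have hp1 : (1 - 1 / x) * (1 - 1 / y) ≤ (x - 1) * (y - 1) :=
    mul_le_mul (by linarith) (by linarith) (by linarith) (by linarith)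
  rw [key]
  nlinarith [hp1]

/-- f is monotone on [1, ∞). -/
lemma f_mono {x y : ℚ} (hx : 1 ≤ x) (hxy : x ≤ y) :
    x - 1 / x ≤ y - 1 / y := by
  have hx0 : 0 < x := lt_of_lt_of_le one_pos hx
  have := one_div_le_one_div_of_le hx0 hxy
  linarith

/-- Superadditivity over a finset. -/
lemma f_sum_le_prod (S : Finset ℕ) (g : ℕ → ℕ) (hg : ∀ p ∈ S, 1 ≤ g p) :
    ∑ p ∈ S, ((g p : ℚ) - 1 / (g p : ℚ)) ≤
      (∏ p ∈ S, (g p : ℚ)) - 1 / ∏ p ∈ S, (g p : ℚ) := by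
  induction S using Finset.induction with
  | empty => simp
  | insert p S hpS ih =>
    rw [Finset.sum_insert hpS, Finset.prod_insert hpS]
    have h1 : (1 : ℚ) ≤ g p := by exact_mod_cast hg p (Finset.mem_insert_self p S)
    have h2 : (1 : ℚ) ≤ ∏ q ∈ S, (g q : ℚ) := by
      have := Finset.prod_le_prod (f := fun _ : ℕ => (1 : ℚ)) (g := fun q => (g q : ℚ))
        (s := S) (fun _ _ => zero_le_one)
        (fun q hq => by show (1:ℚ) ≤ (g q : ℚ); exact_mod_cast hg q (Finset.mem_insert_of_mem hq))
      simpa using this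
    have h3 := ih (fun q hq => hg q (Finset.mem_insert_of_mem hq))
    have h4 := f_superadd h1 h2
    linarith

/-- A prime power dividing a lcm divides one of the terms. -/
lemma pow_dvd_lcm_exists {ι : Type*} [DecidableEq ι] (s : Finset ι) (f : ι → ℕ) (hf : ∀ i ∈ s, f i ≠ 0)
    {p a : ℕ} (hp : p.Prime) (ha : a ≠ 0) (h : p ^ a ∣ s.lcm f) : ∃ i ∈ s, p ^ a ∣ f i := by
  induction s using Finset.induction with
  | empty =>
    simp only [Finset.lcm_empty, Nat.dvd_one] at h
    have := Nat.one_lt_pow ha hp.one_lt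
    omega
  | insert i S hiS ih =>
    rw [Finset.lcm_insert] at h
    have hfi : f i ≠ 0 := hf i (Finset.mem_insert_self i S)
    have hlcm : S.lcm f ≠ 0 := by
      intro h0
      obtain ⟨x, hx, hx0⟩ := Finset.lcm_eq_zero_iff.mp h0
      exact hf x (Finset.mem_insert_of_mem hx) hx0
    have hL : Nat.lcm (f i) (S.lcm f) ≠ 0 := Nat.lcm_ne_zero hfi hlcm
    have := (hp.pow_dvd_iff_le_factorization hL).mp h
    rw [Nat.factorization_lcm hfi hlcm, Finsupp.sup_apply, le_sup_iff] at this
    rcases this with h' | h'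
    · exact ⟨i, Finset.mem_insert_self i S,
        (hp.pow_dvd_iff_le_factorization hfi).mpr h'⟩
    · obtain ⟨x, hx, hxd⟩ := ih (fun x hx => hf x (Finset.mem_insert_of_mem hx))
        ((hp.pow_dvd_iff_le_factorization hlcm).mpr h')
      exact ⟨x, Finset.mem_insert_of_mem hx, hxd⟩

/-- Product of prime powers (distinct primes) each dividing `n` divides `n`. -/
lemma prod_pow_dvd (S : Finset ℕ) (a : ℕ → ℕ) (n : ℕ)
    (hS : ∀ p ∈ S, Nat.Prime p) (hd : ∀ p ∈ S, p ^ a p ∣ n) :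
    (∏ p ∈ S, p ^ a p) ∣ n := by
  induction S using Finset.induction with
  | empty => simp
  | insert p T hpT ih =>
    rw [Finset.prod_insert hpT]
    have hp : Nat.Prime p := hS p (Finset.mem_insert_self p T)
    have hcop : Nat.Coprime (p ^ a p) (∏ q ∈ T, q ^ a q) := by
      apply Nat.Coprime.prod_right
      intro q hq
      have hq' : Nat.Prime q := hS q (Finset.mem_insert_of_mem hq)
      have hne : p ≠ q := fun h => hpT (h ▸ hq)
      exact Nat.Coprime.pow _ _ ((Nat.coprime_primes hp hq').mpr hne)
    exact hcop.mul_dvd_of_dvd_of_dvd (hd p (Finset.mem_insert_self p T))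
      (ih (fun q hq => hS q (Finset.mem_insert_of_mem hq))
        (fun q hq => hd q (Finset.mem_insert_of_mem hq)))

theorem prime_power_sum_le_sum (r : ℕ) (j : Fin r → ℕ) (hj : ∀ i, 0 < j i)
    (J : ℕ) (hJ : 0 < J) (hdvd : J ∣ Finset.univ.lcm j) :
    ∑ p ∈ J.primeFactors,
        ((p : ℚ) ^ (J.factorization p) - 1 / (p : ℚ) ^ (J.factorization p)) ≤
      ∑ i, ((j i : ℚ) - 1 / (j i : ℚ)) := by
  classical
  rcases Nat.eq_zero_or_pos r with rfl | hr
  · have : J = 1 := by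
      simpa using Nat.eq_one_of_dvd_one (by simpa using hdvd)
    subst this
    simp
  have hne : Nonempty (Fin r) := ⟨⟨0, hr⟩⟩
  have hchoice : ∀ p ∈ J.primeFactors, ∃ i : Fin r, p ^ (J.factorization p) ∣ j i := by
    intro p hp
    have hpp : p.Prime := Nat.prime_of_mem_primeFactors hp
    have ha : J.factorization p ≠ 0 :=
      (hpp.factorization_pos_of_dvd hJ.ne' (Nat.dvd_of_mem_primeFactors hp)).ne'
    have hpow : p ^ (J.factorization p) ∣ Finset.univ.lcm j :=
      dvd_trans (Nat.ordProj_dvd J p) hdvd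
    obtain ⟨i, _, hi⟩ := pow_dvd_lcm_exists Finset.univ j
      (fun i _ => (hj i).ne') hpp ha hpow
    exact ⟨i, hi⟩
  choose g hg using hchoice
  set G : ℕ → Fin r := fun p =>
    if h : p ∈ J.primeFactors then g p h else Classical.arbitrary _ with hG
  have hfib : ∑ p ∈ J.primeFactors,
      ((p : ℚ) ^ (J.factorization p) - 1 / (p : ℚ) ^ (J.factorization p)) =
      ∑ i : Fin r, ∑ p ∈ J.primeFactors.filter (fun p => G p = i),
        ((p : ℚ) ^ (J.factorization p) - 1 / (p : ℚ) ^ (J.factorization p)) := by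
    rw [Finset.sum_fiberwise]
  rw [hfib]
  apply Finset.sum_le_sum
  intro i _
  set S := J.primeFactors.filter (fun p => G p = i) with hSdef
  have hSsub : S ⊆ J.primeFactors := Finset.filter_subset _ _
  have hprime : ∀ p ∈ S, Nat.Prime p := fun p hp =>
    Nat.prime_of_mem_primeFactors (hSsub hp)
  have hdvd' : ∀ p ∈ S, p ^ (J.factorization p) ∣ j i := by
    intro p hp
    rw [hSdef, Finset.mem_filter] at hp
    obtain ⟨hp1, hp2⟩ := hp
    have hGp : G p = g p hp1 := by rw [hG]; simp [hp1]
    rw [hGp] at hp2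
    exact hp2 ▸ hg p hp1
  have hprodvd : (∏ p ∈ S, p ^ (J.factorization p)) ∣ j i :=
    prod_pow_dvd S _ (j i) hprime hdvd'
  have hpow1 : ∀ p ∈ S, 1 ≤ p ^ (J.factorization p) := fun p hp =>
    Nat.one_le_iff_ne_zero.mpr (pow_ne_zero _ (hprime p hp).pos.ne')
  calc ∑ p ∈ S, ((p : ℚ) ^ (J.factorization p) - 1 / (p : ℚ) ^ (J.factorization p))
      = ∑ p ∈ S, (((p ^ J.factorization p : ℕ) : ℚ) -
          1 / ((p ^ J.factorization p : ℕ) : ℚ)) := by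
        apply Finset.sum_congr rfl; intro p _; push_cast; ring
    _ ≤ (∏ p ∈ S, ((p ^ J.factorization p : ℕ) : ℚ)) -
          1 / ∏ p ∈ S, ((p ^ J.factorization p : ℕ) : ℚ) :=
        f_sum_le_prod S _ hpow1
    _ = ((∏ p ∈ S, p ^ J.factorization p : ℕ) : ℚ) -
          1 / ((∏ p ∈ S, p ^ J.factorization p : ℕ) : ℚ) := by push_cast; ring
    _ ≤ ((j i : ℚ) - 1 / (j i : ℚ)) := by
        apply f_mono
        · exact_mod_cast Nat.one_le_iff_ne_zero.mpr
            (Finset.prod_ne_zero_iff.mpr fun p hp =>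
              pow_ne_zero _ (hprime p hp).pos.ne')
        · exact_mod_cast Nat.le_of_dvd (hj i) hprodvd
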